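/- Let 𝓢_t be a continuous family of complex Hamiltonian 2n×2n matrices and F_t the solution of Ḟ_t = 𝓢_t F_t, F_0 = I. If 𝓜_0 is a complex matrix such that I + 𝓜_0 + F_t(I − 𝓜_0) is invertible for all t, then 𝓜_t := (I + 𝓜_0 − F_t(I − 𝓜_0))(I + 𝓜_0 + F_t(I − 𝓜_0))^{-1} solves the matrix Riccati equation 𝓜̇_t = ½(𝓜_t + I)𝓢_t(𝓜_t − I) with 𝓜_0 at t = 0. -/

import Mathlib

open Matrix Complex

attribute [local instance] Matrix.normedAddCommGroup Matrix.normedSpace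

set_option linter.unusedSectionVars false

namespace Stmt11Aux

variable {ι : Type*} [Fintype ι] [DecidableEq ι]

theorem hasDerivAt_entry {A : ℝ → Matrix ι ι ℂ} {A' : Matrix ι ι ℂ} {t : ℝ}
    (h : HasDerivAt A A' t) (i j : ι) :
    HasDerivAt (fun s => A s i j) (A' i j) t :=
  (hasDerivAt_pi.mp ((hasDerivAt_pi.mp h) i)) j

theorem hasDerivAt_of_entries {A : ℝ → Matrix ι ι ℂ} {A' : Matrix ι ι ℂ} {t : ℝ}
    (h : ∀ i j, HasDerivAt (fun s => A s i j) (A' i j) t) :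
    HasDerivAt A A' t :=
  hasDerivAt_pi.mpr fun i => hasDerivAt_pi.mpr fun j => h i j

theorem hasDerivAt_matmul {A B : ℝ → Matrix ι ι ℂ} {A' B' : Matrix ι ι ℂ} {t : ℝ}
    (hA : HasDerivAt A A' t) (hB : HasDerivAt B B' t) :
    HasDerivAt (fun s => A s * B s) (A' * B t + A t * B') t := by
  refine hasDerivAt_of_entries fun i j => ?_
  simp only [Matrix.mul_apply, Matrix.add_apply]
  have h := HasDerivAt.fun_sum (u := Finset.univ)
    (fun k (_ : k ∈ Finset.univ) =>
      (hasDerivAt_entry hA i k).fun_mul (hasDerivAt_entry hB k j))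
  simpa [Finset.sum_add_distrib] using h

theorem differentiableAt_det {A : ℝ → Matrix ι ι ℂ} {t : ℝ}
    (h : ∀ i j, DifferentiableAt ℝ (fun s => A s i j) t) :
    DifferentiableAt ℝ (fun s => (A s).det) t := by
  simp only [Matrix.det_apply']
  refine DifferentiableAt.fun_sum fun σ _ => DifferentiableAt.const_mul ?_ _
  exact DifferentiableAt.fun_finset_prod fun i _ => h (σ i) i

theorem differentiableAt_adjugate {A : ℝ → Matrix ι ι ℂ} {t : ℝ}
    (h : ∀ i j, DifferentiableAt ℝ (fun s => A s i j) t) (i j : ι) :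
    DifferentiableAt ℝ (fun s => (A s).adjugate i j) t := by
  simp only [Matrix.adjugate_apply]
  refine differentiableAt_det fun k l => ?_
  rcases eq_or_ne k j with rfl | hk
  · simp only [Matrix.updateRow_self]
    exact differentiableAt_const _
  · simp only [Matrix.updateRow_ne hk]
    exact h k l

theorem hasDerivAt_matrix_inv {B : ℝ → Matrix ι ι ℂ} {B' : Matrix ι ι ℂ} {t : ℝ}
    (hB : HasDerivAt B B' t) (hu : ∀ s, IsUnit (B s)) :
    HasDerivAt (fun s => (B s)⁻¹) (-((B t)⁻¹ * B' * (B t)⁻¹)) t := by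
  have hent : ∀ i j, DifferentiableAt ℝ (fun s => B s i j) t :=
    fun i j => (hasDerivAt_entry hB i j).differentiableAt
  have hdetu : ∀ s, IsUnit (B s).det := fun s => (Matrix.isUnit_iff_isUnit_det _).mp (hu s)
  have hdetne : (B t).det ≠ 0 := (hdetu t).ne_zero
  have hdet : DifferentiableAt ℝ (fun s => (B s).det) t := differentiableAt_det hent
  have hG : DifferentiableAt ℝ (fun s => (B s)⁻¹) t := by
    have he : (fun s => (B s)⁻¹) = fun s => ((B s).det)⁻¹ • (B s).adjugate :=
      funext fun s => by rw [Matrix.inv_def, Ring.inverse_eq_inv]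
    rw [he]
    refine DifferentiableAt.smul (hdet.inv hdetne) ?_
    exact differentiableAt_pi.mpr fun i => differentiableAt_pi.mpr fun j =>
      differentiableAt_adjugate hent i j
  set g := deriv (fun s => (B s)⁻¹) t with hgdef
  have hG' : HasDerivAt (fun s => (B s)⁻¹) g t := hG.hasDerivAt
  have h1 : HasDerivAt (fun s => B s * (B s)⁻¹) (B' * (B t)⁻¹ + B t * g) t :=
    hasDerivAt_matmul hB hG'
  have h2 : (fun s => B s * (B s)⁻¹) = fun _ => (1 : Matrix ι ι ℂ) :=
    funext fun s => Matrix.mul_nonsing_inv _ (hdetu s)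
  rw [h2] at h1
  have h0 : B' * (B t)⁻¹ + B t * g = 0 := by
    have := h1.unique (hasDerivAt_const t (1 : Matrix ι ι ℂ))
    exact this
  have hBg : B t * g = -(B' * (B t)⁻¹) := by
    rw [eq_neg_iff_add_eq_zero, add_comm]; exact h0
  have hgval : g = -((B t)⁻¹ * B' * (B t)⁻¹) := by
    have : (B t)⁻¹ * (B t * g) = (B t)⁻¹ * -(B' * (B t)⁻¹) := by rw [hBg]
    rw [← mul_assoc, Matrix.nonsing_inv_mul _ (hdetu t), one_mul] at this
    rw [this, mul_neg, mul_assoc]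
  rw [← hgval]
  exact hG'

end Stmt11Aux

theorem stmt_11 (n : ℕ) (S : ℝ → Matrix (Fin n ⊕ Fin n) (Fin n ⊕ Fin n) ℂ)
    (hScont : Continuous S)
    (hHam : ∀ t, (S t)ᵀ * (Matrix.fromBlocks 0 1 (-1) 0) +
      (Matrix.fromBlocks 0 1 (-1) 0 : Matrix (Fin n ⊕ Fin n) (Fin n ⊕ Fin n) ℂ) * S t = 0)
    (F : ℝ → Matrix (Fin n ⊕ Fin n) (Fin n ⊕ Fin n) ℂ)
    (hF : ∀ t, HasDerivAt F (S t * F t) t) (hF0 : F 0 = 1)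
    (M₀ : Matrix (Fin n ⊕ Fin n) (Fin n ⊕ Fin n) ℂ)
    (hinv : ∀ t, IsUnit (1 + M₀ + F t * (1 - M₀)))
    (M : ℝ → Matrix (Fin n ⊕ Fin n) (Fin n ⊕ Fin n) ℂ)
    (hM : ∀ t, M t = (1 + M₀ - F t * (1 - M₀)) * (1 + M₀ + F t * (1 - M₀))⁻¹) :
    M 0 = M₀ ∧
    ∀ t, HasDerivAt M ((1 / 2 : ℂ) • ((M t + 1) * S t * (M t - 1))) t := by
  constructor
  · have h0 := hM 0
    rw [hF0] at h0
    have h2m : (1 + M₀ + 1 * (1 - M₀) : Matrix (Fin n ⊕ Fin n) (Fin n ⊕ Fin n) ℂ)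
        = (2:ℂ) • 1 := by
      rw [one_mul, two_smul]; abel
    have hinvcalc : ((2:ℂ) • (1 : Matrix (Fin n ⊕ Fin n) (Fin n ⊕ Fin n) ℂ))⁻¹
        = (2:ℂ)⁻¹ • 1 := by
      apply Matrix.inv_eq_right_inv
      rw [smul_mul_assoc, mul_smul_comm, smul_smul, mul_one]
      norm_num
    rw [h0, h2m, hinvcalc, mul_smul_comm, mul_one]
    have hd : (1 + M₀ - 1 * (1 - M₀) : Matrix (Fin n ⊕ Fin n) (Fin n ⊕ Fin n) ℂ)
        = M₀ + M₀ := by rw [one_mul]; abel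
    rw [hd, ← two_smul ℂ, smul_smul]
    norm_num
  · intro t
    have hMfun : M = fun s => (1 + M₀ - F s * (1 - M₀)) * (1 + M₀ + F s * (1 - M₀))⁻¹ :=
      funext hM
    have hP : HasDerivAt (fun s => F s * (1 - M₀)) (S t * F t * (1 - M₀)) t := by
      have h := Stmt11Aux.hasDerivAt_matmul (hF t) (hasDerivAt_const t (1 - M₀))
      simpa using h
    have hBder : HasDerivAt (fun s => 1 + M₀ + F s * (1 - M₀)) (S t * F t * (1 - M₀)) t := by
      have h := (hasDerivAt_const t (1 + M₀ : Matrix (Fin n ⊕ Fin n) (Fin n ⊕ Fin n) ℂ)).fun_add hP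
      rw [zero_add] at h; exact h
    have hAder : HasDerivAt (fun s => 1 + M₀ - F s * (1 - M₀)) (-(S t * F t * (1 - M₀))) t := by
      have h := (hasDerivAt_const t (1 + M₀ : Matrix (Fin n ⊕ Fin n) (Fin n ⊕ Fin n) ℂ)).fun_sub hP
      rw [zero_sub] at h; exact h
    have hInvDer := Stmt11Aux.hasDerivAt_matrix_inv hBder hinv
    have hMder := Stmt11Aux.hasDerivAt_matmul hAder hInvDer
    set Bt := 1 + M₀ + F t * (1 - M₀) with hBtdef
    set At := 1 + M₀ - F t * (1 - M₀) with hAtdef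
    have hG1 : Bt * Bt⁻¹ = 1 :=
      Matrix.mul_nonsing_inv _ ((Matrix.isUnit_iff_isUnit_det _).mp (hinv t))
    have hval : (1 / 2 : ℂ) • ((At * Bt⁻¹ + 1) * S t * (At * Bt⁻¹ - 1))
        = -(S t * F t * (1 - M₀)) * Bt⁻¹
          + At * -(Bt⁻¹ * (S t * F t * (1 - M₀)) * Bt⁻¹) := by
      have hM1 : At * Bt⁻¹ - 1 = (At - Bt) * Bt⁻¹ := by
        conv_rhs => rw [Matrix.sub_mul]
        rw [hG1]
      have hAB : At - Bt = -(F t * (1 - M₀) + F t * (1 - M₀)) := by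
        rw [hAtdef, hBtdef]; abel
      rw [hM1, hAB]
      have e1 : (At * Bt⁻¹ + 1) * S t * (-(F t * (1 - M₀) + F t * (1 - M₀)) * Bt⁻¹)
          = (-(S t * F t * (1 - M₀)) * Bt⁻¹
              + At * -(Bt⁻¹ * (S t * F t * (1 - M₀)) * Bt⁻¹))
            + (-(S t * F t * (1 - M₀)) * Bt⁻¹
              + At * -(Bt⁻¹ * (S t * F t * (1 - M₀)) * Bt⁻¹)) := by
        noncomm_ring
      rw [e1, ← two_smul ℂ, smul_smul]
      norm_num
    rw [hMfun]
    have hMt : M t = At * Bt⁻¹ := hM t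
    rw [show ((fun s => (1 + M₀ - F s * (1 - M₀)) * (1 + M₀ + F s * (1 - M₀))⁻¹) t) = At * Bt⁻¹ from rfl] at *
    simpa only [hval] using hMder
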